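/- For positive definite matrices A, B and arbitrary matrix C, and α ∈ [0,1], the map L(α; A,B,C) = C* B^{-1/2}(B^{1/2} A⁻¹ B^{1/2})^α B^{-1/2} C is jointly convex in (A,B,C). -/

import Mathlib

open Matrix
open scoped ComplexOrder Classical

/-- Square root of a positive semidefinite matrix, extended by `0`. -/
noncomputable def msqrt {n : Type*} [Fintype n] [DecidableEq n] (A : Matrix n n ℂ) :
    Matrix n n ℂ :=
  if h : A.PosSemidef then h.1.cfc Real.sqrt else 0

/-- Real power of a Hermitian matrix via the functional calculus, extended by `0`. -/
noncomputable def mrpow {n : Type*} [Fintype n] [DecidableEq n] (A : Matrix n n ℂ) (α : ℝ) :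
    Matrix n n ℂ :=
  if h : A.IsHermitian then h.cfc (fun t => t ^ α) else 0

/-- A completely positive linear map between matrix algebras (Choi–Kraus form). -/
def IsCPMap {n m : Type*} [Fintype n] [Fintype m] (Φ : Matrix n n ℂ → Matrix m m ℂ) : Prop :=
  ∃ (r : ℕ) (C : Fin r → Matrix n m ℂ), ∀ X, Φ X = ∑ i, (C i)ᴴ * X * C i

/-- The matrix geometric mean `A^{1/2} (A^{-1/2} B A^{-1/2})^{1/2} A^{1/2}`. -/
noncomputable def geomMean {n : Type*} [Fintype n] [DecidableEq n] (A B : Matrix n n ℂ) :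
    Matrix n n ℂ :=
  msqrt A * msqrt ((msqrt A)⁻¹ * B * (msqrt A)⁻¹) * msqrt A

/-- The weighted geometric mean `B^{1/2} (B^{-1/2} A B^{-1/2})^α B^{1/2}`. -/
noncomputable def wgeomMean {n : Type*} [Fintype n] [DecidableEq n] (α : ℝ)
    (A B : Matrix n n ℂ) : Matrix n n ℂ :=
  msqrt B * mrpow ((msqrt B)⁻¹ * A * (msqrt B)⁻¹) α * msqrt B

/-- The harmonic mean `2 (A⁻¹ + B⁻¹)⁻¹`. -/
noncomputable def harmMean {n : Type*} [Fintype n] [DecidableEq n] (A B : Matrix n n ℂ) :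
    Matrix n n ℂ :=
  (2 : ℂ) • (A⁻¹ + B⁻¹)⁻¹

set_option linter.unusedSectionVars false
set_option maxHeartbeats 1600000

namespace LiebAux
open Matrix
variable {n : Type*} [Fintype n] [DecidableEq n]

lemma psd_smul {A : Matrix n n ℂ} (hA : A.PosSemidef) {l : ℝ} (hl : 0 ≤ l) :
    ((l : ℂ) • A).PosSemidef := by
  refine PosSemidef.of_dotProduct_mulVec_nonneg ?_ fun x => ?_
  · unfold Matrix.IsHermitian
    rw [conjTranspose_smul, hA.1]
    congr 1
    simp [Complex.star_def, Complex.conj_ofReal]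
  · rw [smul_mulVec, dotProduct_smul, smul_eq_mul]
    exact mul_nonneg (by exact_mod_cast hl) (hA.dotProduct_mulVec_nonneg x)

lemma posDef_smul {A : Matrix n n ℂ} (hA : A.PosDef) {l : ℝ} (hl : 0 < l) :
    ((l : ℂ) • A).PosDef := by
  refine PosDef.of_dotProduct_mulVec_pos (psd_smul hA.posSemidef hl.le).1 fun x hx => ?_
  rw [smul_mulVec, dotProduct_smul, smul_eq_mul]
  exact mul_pos (by exact_mod_cast hl) (hA.dotProduct_mulVec_pos hx)

lemma conj_dot (M N : Matrix n n ℂ) (x : n → ℂ) :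
    star x ⬝ᵥ (Nᴴ * M * N) *ᵥ x = star (N *ᵥ x) ⬝ᵥ M *ᵥ (N *ᵥ x) := by
  simp [star_mulVec, dotProduct_mulVec, vecMul_vecMul, Matrix.mul_assoc]

lemma posDef_conj {M N : Matrix n n ℂ} (hM : M.PosDef) (hN : IsUnit N) :
    (Nᴴ * M * N).PosDef := by
  refine PosDef.of_dotProduct_mulVec_pos (isHermitian_conjTranspose_mul_mul N hM.1) fun x hx => ?_
  have hNx : N *ᵥ x ≠ 0 := fun h => hx <| by
    have := (mulVec_injective_iff_isUnit.mpr hN) (a₁ := x) (a₂ := 0)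
    simp only [mulVec_zero] at this
    exact this h
  rw [conj_dot]
  exact hM.dotProduct_mulVec_pos hNx

lemma star_coe (l : ℝ) : star (l : ℂ) = (l : ℂ) := by
  simp [Complex.star_def, Complex.conj_ofReal]

lemma one_sub_coe (l : ℝ) : 1 - (l : ℂ) = ((1 - l : ℝ) : ℂ) := by push_cast; ring

lemma mix_posDef {A₁ A₂ : Matrix n n ℂ} (hA₁ : A₁.PosDef) (hA₂ : A₂.PosDef)
    {l : ℝ} (hl0 : 0 ≤ l) (hl1 : l ≤ 1) :
    ((l : ℂ) • A₁ + (1 - (l : ℂ)) • A₂).PosDef := by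
  rcases eq_or_lt_of_le hl0 with h | h
  · simp only [← h]
    norm_num
    exact hA₂
  · rw [one_sub_coe]
    exact (posDef_smul hA₁ h).add_posSemidef (psd_smul hA₂.posSemidef (by linarith))

/-! ### msqrt -/

lemma msqrt_eq {B : Matrix n n ℂ} (hB : B.PosSemidef) : msqrt B = cfc Real.sqrt B := by
  rw [msqrt, dif_pos hB, hB.1.cfc_eq]

lemma msqrt_posSemidef {B : Matrix n n ℂ} (hB : B.PosSemidef) : (msqrt B).PosSemidef := by
  rw [msqrt_eq hB]
  open scoped MatrixOrder in
  exact Matrix.nonneg_iff_posSemidef.mp (cfc_nonneg fun x _ => Real.sqrt_nonneg x)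

lemma msqrt_mul_self {B : Matrix n n ℂ} (hB : B.PosSemidef) : msqrt B * msqrt B = B := by
  have hsp : ∀ x ∈ spectrum ℝ B, 0 ≤ x := by
    intro x hx
    rw [hB.1.spectrum_real_eq_range_eigenvalues] at hx
    obtain ⟨i, rfl⟩ := hx
    exact hB.eigenvalues_nonneg i
  rw [msqrt_eq hB, ← cfc_mul (fun x => Real.sqrt x) (fun x => Real.sqrt x) B]
  conv_rhs => rw [← cfc_id ℝ B hB.1]
  exact cfc_congr fun x hx => Real.mul_self_sqrt (hsp x hx)

lemma msqrt_posDef {B : Matrix n n ℂ} (hB : B.PosDef) : (msqrt B).PosDef := by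
  have hS := msqrt_posSemidef hB.posSemidef
  refine PosDef.of_dotProduct_mulVec_pos hS.1 fun x hx => ?_
  rcases (hS.dotProduct_mulVec_nonneg x).lt_or_eq with h | h
  · exact h
  · exfalso
    have h0 : msqrt B *ᵥ x = 0 := (hS.dotProduct_mulVec_zero_iff x).mp h.symm
    have : B *ᵥ x = 0 := by
      rw [← msqrt_mul_self hB.posSemidef, ← mulVec_mulVec, h0, mulVec_zero]
    exact (hB.dotProduct_mulVec_pos hx).ne' (by rw [this, dotProduct_zero])

lemma msqrt_isHermitian {B : Matrix n n ℂ} (hB : B.PosDef) : (msqrt B).IsHermitian :=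
  (msqrt_posSemidef hB.posSemidef).1

lemma msqrt_isUnit {B : Matrix n n ℂ} (hB : B.PosDef) : IsUnit (msqrt B) :=
  (msqrt_posDef hB).isUnit

lemma msqrt_inv_mul {B : Matrix n n ℂ} (hB : B.PosDef) : (msqrt B)⁻¹ * msqrt B = 1 :=
  nonsing_inv_mul _ ((isUnit_iff_isUnit_det _).mp (msqrt_isUnit hB))

lemma msqrt_mul_inv {B : Matrix n n ℂ} (hB : B.PosDef) : msqrt B * (msqrt B)⁻¹ = 1 :=
  mul_nonsing_inv _ ((isUnit_iff_isUnit_det _).mp (msqrt_isUnit hB))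

lemma msqrt_inv_posDef {B : Matrix n n ℂ} (hB : B.PosDef) : (msqrt B)⁻¹.PosDef :=
  (msqrt_posDef hB).inv

lemma msqrt_inv_isHermitian {B : Matrix n n ℂ} (hB : B.PosDef) : ((msqrt B)⁻¹).IsHermitian :=
  (msqrt_isHermitian hB).inv

lemma msqrt_inv_mul_self_inv {B : Matrix n n ℂ} (hB : B.PosDef) :
    (msqrt B)⁻¹ * (msqrt B)⁻¹ = B⁻¹ := by
  rw [← Matrix.mul_inv_rev, msqrt_mul_self hB.posSemidef]

/-! ### mrpow -/

lemma contOn (f : ℝ → ℝ) (A : Matrix n n ℂ) : ContinuousOn f (spectrum ℝ A) := by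
  rw [continuousOn_iff_continuous_restrict]; fun_prop

lemma mrpow_eq {Z : Matrix n n ℂ} (hZ : Z.IsHermitian) (γ : ℝ) :
    mrpow Z γ = cfc (fun t : ℝ => t ^ γ) Z := by
  rw [mrpow, dif_pos hZ, hZ.cfc_eq]

lemma mrpow_isHermitian {Z : Matrix n n ℂ} (hZ : Z.IsHermitian) (γ : ℝ) :
    (mrpow Z γ).IsHermitian := by
  rw [mrpow_eq hZ]
  exact cfc_predicate (fun t : ℝ => t ^ γ) Z

lemma spectrum_pos {Z : Matrix n n ℂ} (hZ : Z.PosDef) {x : ℝ} (hx : x ∈ spectrum ℝ Z) : 0 < x := by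
  rw [hZ.1.spectrum_real_eq_range_eigenvalues] at hx
  obtain ⟨i, rfl⟩ := hx
  exact hZ.eigenvalues_pos i

lemma mrpow_mul_mrpow {Z : Matrix n n ℂ} (hZ : Z.PosDef) (a b : ℝ) :
    mrpow Z a * mrpow Z b = mrpow Z (a + b) := by
  rw [mrpow_eq hZ.1, mrpow_eq hZ.1, mrpow_eq hZ.1,
    ← cfc_mul _ _ Z (contOn _ _) (contOn _ _)]
  exact cfc_congr fun x hx => (Real.rpow_add (spectrum_pos hZ hx) a b).symm

lemma mrpow_zero {Z : Matrix n n ℂ} (hZ : Z.IsHermitian) : mrpow Z 0 = 1 := by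
  rw [mrpow_eq hZ]
  have : (fun t : ℝ => t ^ (0 : ℝ)) = fun _ : ℝ => 1 := funext fun t => Real.rpow_zero t
  rw [this]
  exact cfc_const_one ℝ Z hZ

lemma mrpow_one {Z : Matrix n n ℂ} (hZ : Z.IsHermitian) : mrpow Z 1 = Z := by
  rw [mrpow_eq hZ]
  have : (fun t : ℝ => t ^ (1 : ℝ)) = id := funext fun t => Real.rpow_one t
  rw [this]
  exact cfc_id ℝ Z hZ

lemma mrpow_neg {Z : Matrix n n ℂ} (hZ : Z.PosDef) (γ : ℝ) :
    mrpow Z (-γ) = (mrpow Z γ)⁻¹ := by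
  symm
  apply Matrix.inv_eq_left_inv
  rw [mrpow_mul_mrpow hZ, neg_add_cancel, mrpow_zero hZ.1]

lemma mrpow_posDef {Z : Matrix n n ℂ} (hZ : Z.PosDef) (γ : ℝ) : (mrpow Z γ).PosDef := by
  rw [mrpow, dif_pos hZ.1]
  unfold Matrix.IsHermitian.cfc
  set U : Matrix n n ℂ := (Matrix.IsHermitian.eigenvectorUnitary hZ.1 : Matrix n n ℂ) with hU
  have hUu : star U * U = 1 := Unitary.star_mul_self_of_mem (SetLike.coe_mem _)
  have hUu' : U * star U = 1 := Unitary.mul_star_self_of_mem (SetLike.coe_mem _)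
  have hUs : IsUnit (star U) := ⟨⟨star U, U, by exact hUu, by exact hUu'⟩, rfl⟩
  have hD : (diagonal ((↑) ∘ (fun t : ℝ => t ^ γ) ∘ hZ.1.eigenvalues) : Matrix n n ℂ).PosDef := by
    rw [Matrix.posDef_diagonal_iff]
    intro i
    exact Complex.zero_lt_real.mpr (Real.rpow_pos_of_pos (hZ.eigenvalues_pos i) γ)
  have hconj := posDef_conj hD hUs
  rw [star_eq_conjTranspose] at hconj
  rwa [conjTranspose_conjTranspose] at hconj

/-- continuity of γ ↦ mrpow Z γ -/
lemma mrpow_continuous {Z : Matrix n n ℂ} (hZ : Z.PosDef) :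
    Continuous (fun γ : ℝ => mrpow Z γ) := by
  unfold mrpow
  have : (fun γ : ℝ => (if h : Z.IsHermitian then h.cfc (fun t => t ^ γ) else 0))
      = fun γ : ℝ => (Matrix.IsHermitian.eigenvectorUnitary hZ.1 : Matrix n n ℂ) *
          diagonal ((↑) ∘ (fun t : ℝ => t ^ γ) ∘ hZ.1.eigenvalues) *
          star (Matrix.IsHermitian.eigenvectorUnitary hZ.1 : Matrix n n ℂ) := by
    funext γ
    rw [dif_pos hZ.1]
    rfl
  rw [this]
  refine ((continuous_const.matrix_mul ?_).matrix_mul continuous_const)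
  refine Continuous.matrix_diagonal ?_
  refine continuous_pi fun i => ?_
  refine Complex.continuous_ofReal.comp ?_
  have : (fun γ : ℝ => ((fun t : ℝ => t ^ γ) ∘ hZ.1.eigenvalues) i)
      = fun γ : ℝ => Real.exp (Real.log (hZ.1.eigenvalues i) * γ) := by
    funext γ
    exact Real.rpow_def_of_pos (hZ.eigenvalues_pos i) γ
  rw [this]
  fun_prop

/-- a block-diagonal PSD matrix -/
lemma psd_blockDiag {X Y : Matrix n n ℂ} (hX : X.PosSemidef) (hY : Y.PosSemidef) :
    (fromBlocks X 0 0 Y).PosSemidef := by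
  apply PosSemidef.of_dotProduct_mulVec_nonneg
  · exact isHermitian_fromBlocks_iff.mpr ⟨hX.1, by simp, by simp, hY.1⟩
  · intro x
    rw [← Sum.elim_comp_inl_inr x, Function.star_sumElim, fromBlocks_mulVec]
    simp only [zero_mulVec, add_zero, zero_add]
    rw [sumElim_dotProduct_sumElim]
    exact add_nonneg (hX.dotProduct_mulVec_nonneg _) (hY.dotProduct_mulVec_nonneg _)

/-- PSD of [[X^a, X^m],[X^m, X^b]] for commuting powers, conjugated by diag(S,S). -/
lemma psd_sub_of_psd_add {P P' Q Q' R : Matrix n n ℂ}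
    (h : (fromBlocks P' R Rᴴ Q').PosSemidef)
    (hP : (P - P').PosSemidef) (hQ : (Q - Q').PosSemidef) :
    (fromBlocks P R Rᴴ Q).PosSemidef := by
  have := h.add (psd_blockDiag hP hQ)
  simpa [Matrix.fromBlocks_add, sub_eq_iff_eq_add] using this

/-- Key: Z hermitian, S posdef, Z*Z ≤ S*S implies Z ≤ S -/
lemma le_of_sq_le_sq {Z S : Matrix n n ℂ} (hZ : Z.IsHermitian) (hS : S.PosDef)
    (h : (S * S - Z * Z).PosSemidef) : (S - Z).PosSemidef := by
  have hH : (S - Z).IsHermitian := hS.1.sub hZ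
  apply hH.posSemidef_iff_eigenvalues_nonneg.mpr
  intro i
  by_contra hneg
  push_neg at hneg
  set μ : ℝ := hH.eigenvalues i with hμdef
  set v : n → ℂ := ⇑(hH.eigenvectorBasis i) with hvdef
  have hv : (S - Z) *ᵥ v = (μ : ℂ) • v := by
    have := hH.mulVec_eigenvectorBasis i
    rw [← hvdef, ← hμdef] at this
    rw [this]
    ext j
    simp [Complex.real_smul]
  have hvne : v ≠ 0 := by
    intro h0
    have := hH.eigenvectorBasis.orthonormal.ne_zero i
    apply this
    ext j
    exact congrFun h0 j
  -- Z *ᵥ v = S *ᵥ v - μ • v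
  have hZv : Z *ᵥ v = S *ᵥ v - (μ : ℂ) • v := by
    have : S *ᵥ v - Z *ᵥ v = (μ:ℂ) • v := by rw [← sub_mulVec]; exact hv
    linear_combination (norm := module) -this
  set w : n → ℂ := S *ᵥ v with hwdef
  set s : ℂ := star v ⬝ᵥ w with hsdef
  set t : ℂ := star v ⬝ᵥ v with htdef
  have hs : 0 < s := hS.dotProduct_mulVec_pos hvne
  have ht : 0 < t := by
    have := (Matrix.PosDef.one (n := n) (R := ℂ)).dotProduct_mulVec_pos hvne
    rwa [one_mulVec] at this
  have hkey : star v ⬝ᵥ (S * S - Z * Z) *ᵥ v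
      = (μ:ℂ) * (star w ⬝ᵥ v) + (μ:ℂ) * s - (μ:ℂ)^2 * t := by
    have hsv : star v ⬝ᵥ (S * S) *ᵥ v = star w ⬝ᵥ w := by
      have hSS : S * S = Sᴴ * 1 * S := by rw [hS.1.eq, mul_one]
      rw [hSS, conj_dot, one_mulVec]
    have hzv : star v ⬝ᵥ (Z * Z) *ᵥ v = star (Z *ᵥ v) ⬝ᵥ (Z *ᵥ v) := by
      have hZZ : Z * Z = Zᴴ * 1 * Z := by rw [hZ.eq, mul_one]
      rw [hZZ, conj_dot, one_mulVec]
    rw [sub_mulVec, dotProduct_sub, hsv, hzv, hZv]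
    simp only [star_sub, star_smul, sub_dotProduct, dotProduct_sub, smul_dotProduct,
      dotProduct_smul, star_trivial]
    rw [← hsdef, ← htdef]
    have : star ((μ:ℂ)) = (μ:ℂ) := by simp [Complex.star_def, Complex.conj_ofReal]
    rw [this]
    simp only [smul_eq_mul]
    ring
  have hnonneg := h.dotProduct_mulVec_nonneg v
  rw [hkey] at hnonneg
  have hre := (Complex.le_def.mp hnonneg).1
  have hsw : star w ⬝ᵥ v = star s := by
    rw [hsdef, star_dotProduct]
  rw [hsw] at hre
  have hsre : 0 < s.re := (Complex.lt_def.mp hs).1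
  have htre : 0 < t.re := (Complex.lt_def.mp ht).1
  simp only [← Complex.ofReal_pow, Complex.zero_re, Complex.add_re, Complex.sub_re,
    Complex.mul_re, Complex.ofReal_re, Complex.ofReal_im, Complex.conj_re, Complex.conj_im,
    Complex.star_def] at hre
  have h1 : μ * s.re < 0 := mul_neg_of_neg_of_pos hneg hsre
  have hμ2 : 0 < μ ^ 2 := by nlinarith
  have h2 : 0 < μ ^ 2 * t.re := mul_pos hμ2 htre
  nlinarith

lemma sandwich {P Q : Matrix n n ℂ} (h1 : P * Q = 1) (h2 : Q * P = 1) (X : Matrix n n ℂ) :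
    P * (Q * X * Q) * P = X := by
  calc P * (Q * X * Q) * P = (P * Q) * X * (Q * P) := by simp only [Matrix.mul_assoc]
    _ = X := by rw [h1, h2, one_mul, Matrix.mul_one]

/-- Ando's maximality step -/
lemma ando_step {M N K R : Matrix n n ℂ} (hM : M.PosDef) (hK : K.PosDef) (hR : R.IsHermitian)
    (hKMK : K * M⁻¹ * K = N) (hblk : (fromBlocks M R Rᴴ N).PosSemidef) :
    (K - R).PosSemidef := by
  set T : Matrix n n ℂ := (msqrt M)⁻¹ with hTdef
  have hT : T.PosDef := msqrt_inv_posDef hM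
  have hTh : Tᴴ = T := (msqrt_inv_isHermitian hM).eq
  have hST : msqrt M * T = 1 := msqrt_mul_inv hM
  have hTS : T * msqrt M = 1 := msqrt_inv_mul hM
  have hTMT : T * M * T = 1 := by
    rw [← msqrt_mul_self hM.posSemidef]
    calc T * (msqrt M * msqrt M) * T = (T * msqrt M) * (msqrt M * T) := by
          simp only [Matrix.mul_assoc]
      _ = 1 := by rw [hST, hTS, one_mul]
  have hTT : T * T = M⁻¹ := msqrt_inv_mul_self_inv hM
  have hblk2 : (fromBlocks 1 (T * R * T) (T * R * T)ᴴ (T * N * T)).PosSemidef := by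
    have h2 := hblk.conjTranspose_mul_mul_same (B := fromBlocks T 0 0 T)
    have he : (fromBlocks T 0 0 T)ᴴ * fromBlocks M R Rᴴ N * fromBlocks T 0 0 T
        = fromBlocks (T * M * T) (T * R * T) (T * Rᴴ * T) (T * N * T) := by
      rw [fromBlocks_conjTranspose]
      simp only [conjTranspose_zero, hTh, fromBlocks_multiply, Matrix.mul_zero,
        Matrix.zero_mul, add_zero, zero_add, Matrix.mul_assoc]
    rw [he, hTMT] at h2
    have hRT : (T * R * T)ᴴ = T * Rᴴ * T := by
      simp only [conjTranspose_mul, hTh, Matrix.mul_assoc]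
    rw [hRT]
    exact h2
  haveI : Invertible (1 : Matrix n n ℂ) := invertibleOne
  have hschur := (PosDef.fromBlocks₁₁ (T * R * T) (T * N * T) Matrix.PosDef.one).mp hblk2
  rw [inv_one, Matrix.mul_one] at hschur
  have hRh : (T * R * T)ᴴ = T * R * T := by
    simp only [conjTranspose_mul, hTh, hR.eq, Matrix.mul_assoc]
  rw [hRh] at hschur
  set S : Matrix n n ℂ := T * K * T with hSdef
  have hS : S.PosDef := by
    have := posDef_conj hK hT.isUnit
    rwa [hTh] at this
  have hSS : S * S = T * N * T := by
    rw [hSdef, ← hKMK, ← hTT]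
    simp only [Matrix.mul_assoc]
  have hZh : (T * R * T).IsHermitian := by unfold Matrix.IsHermitian; rw [hRh]
  have hdiff := le_of_sq_le_sq hZh hS (by rw [hSS]; exact hschur)
  -- conjugate back by msqrt M
  have hfinal := hdiff.conjTranspose_mul_mul_same (B := msqrt M)
  have heq : (msqrt M)ᴴ * (S - T * R * T) * msqrt M = K - R := by
    rw [(msqrt_isHermitian hM).eq, Matrix.mul_sub, Matrix.sub_mul, hSdef]
    congr 1
    · calc msqrt M * (T * K * T) * msqrt M
          = (msqrt M * T) * K * (T * msqrt M) := by simp only [Matrix.mul_assoc]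
        _ = K := by rw [hST, hTS, one_mul, Matrix.mul_one]
    · calc msqrt M * (T * R * T) * msqrt M
          = (msqrt M * T) * R * (T * msqrt M) := by simp only [Matrix.mul_assoc]
        _ = R := by rw [hST, hTS, one_mul, Matrix.mul_one]
  rwa [heq] at hfinal

/-- antitonicity of matrix inverse -/
lemma inv_antitone {M N : Matrix n n ℂ} (hM : M.PosDef) (hN : N.PosDef)
    (h : (M - N).PosSemidef) : (N⁻¹ - M⁻¹).PosSemidef := by
  set T : Matrix n n ℂ := (msqrt N)⁻¹ with hTdef
  have hT : T.PosDef := msqrt_inv_posDef hN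
  have hTh : Tᴴ = T := (msqrt_inv_isHermitian hN).eq
  have hST : msqrt N * T = 1 := msqrt_mul_inv hN
  have hTS : T * msqrt N = 1 := msqrt_inv_mul hN
  have hTT : T * T = N⁻¹ := msqrt_inv_mul_self_inv hN
  have hTNT : T * N * T = 1 := by
    rw [← msqrt_mul_self hN.posSemidef]
    calc T * (msqrt N * msqrt N) * T = (T * msqrt N) * (msqrt N * T) := by
          simp only [Matrix.mul_assoc]
      _ = 1 := by rw [hST, hTS, one_mul]
  set K : Matrix n n ℂ := T * M * T with hKdef
  have hK : K.PosDef := by have := posDef_conj hM hT.isUnit; rwa [hTh] at this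
  have hK1 : (K - 1).PosSemidef := by
    have h2 := h.conjTranspose_mul_mul_same (B := T)
    rwa [hTh, Matrix.mul_sub, Matrix.sub_mul, hTNT] at h2
  set R : Matrix n n ℂ := msqrt K with hRdef
  have hR : R.PosDef := msqrt_posDef hK
  have hRi : R⁻¹.PosDef := msqrt_inv_posDef hK
  have hRih : (R⁻¹)ᴴ = R⁻¹ := (msqrt_inv_isHermitian hK).eq
  have hRR : R * R = K := msqrt_mul_self hK.posSemidef
  have hRiR : R⁻¹ * R = 1 := msqrt_inv_mul hK
  have hRRi : R * R⁻¹ = 1 := msqrt_mul_inv hK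
  have hmid : (1 - K⁻¹).PosSemidef := by
    have h2 := hK1.conjTranspose_mul_mul_same (B := R⁻¹)
    have he : (R⁻¹)ᴴ * (K - 1) * R⁻¹ = 1 - K⁻¹ := by
      rw [hRih, Matrix.mul_sub, Matrix.sub_mul, Matrix.mul_one]
      congr 1
      · rw [← hRR]
        calc R⁻¹ * (R * R) * R⁻¹ = (R⁻¹ * R) * (R * R⁻¹) := by simp only [Matrix.mul_assoc]
          _ = 1 := by rw [hRiR, hRRi, one_mul]
      · rw [← hRR, Matrix.mul_inv_rev]
    rwa [he] at h2
  have hfin := hmid.conjTranspose_mul_mul_same (B := T)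
  have he2 : Tᴴ * (1 - K⁻¹) * T = N⁻¹ - M⁻¹ := by
    rw [hTh, Matrix.mul_sub, Matrix.sub_mul, Matrix.mul_one, hTT]
    congr 1
    have hTi : T⁻¹ = msqrt N := by
      rw [hTdef, Matrix.nonsing_inv_nonsing_inv]
      exact (isUnit_iff_isUnit_det _).mp (msqrt_isUnit hN)
    have hKinv : K⁻¹ = msqrt N * M⁻¹ * msqrt N := by
      rw [hKdef, Matrix.mul_inv_rev, Matrix.mul_inv_rev, hTi, ← Matrix.mul_assoc]
    rw [hKinv]
    exact sandwich hTS hST M⁻¹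
  rwa [he2] at hfin
/-- joint convexity of (M, C) ↦ Cᴴ M⁻¹ C -/
lemma lr_convex {M₁ M₂ C₁ C₂ : Matrix n n ℂ} (hM₁ : M₁.PosDef) (hM₂ : M₂.PosDef)
    {l : ℝ} (hl0 : 0 ≤ l) (hl1 : l ≤ 1)
    (hMbar : ((l : ℂ) • M₁ + (1 - (l : ℂ)) • M₂).PosDef) :
    (((l : ℂ) • (C₁ᴴ * M₁⁻¹ * C₁) + (1 - (l : ℂ)) • (C₂ᴴ * M₂⁻¹ * C₂))
      - ((l : ℂ) • C₁ + (1 - (l : ℂ)) • C₂)ᴴ * ((l : ℂ) • M₁ + (1 - (l : ℂ)) • M₂)⁻¹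
        * ((l : ℂ) • C₁ + (1 - (l : ℂ)) • C₂)).PosSemidef := by
  haveI i₁ : Invertible M₁ := hM₁.isUnit.invertible
  haveI i₂ : Invertible M₂ := hM₂.isUnit.invertible
  haveI ibar : Invertible ((l : ℂ) • M₁ + (1 - (l : ℂ)) • M₂) := hMbar.isUnit.invertible
  have hb₁ : (fromBlocks M₁ C₁ C₁ᴴ (C₁ᴴ * M₁⁻¹ * C₁)).PosSemidef := by
    rw [PosDef.fromBlocks₁₁ _ _ hM₁]
    simp only [sub_self]
    exact Matrix.PosSemidef.zero
  have hb₂ : (fromBlocks M₂ C₂ C₂ᴴ (C₂ᴴ * M₂⁻¹ * C₂)).PosSemidef := by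
    rw [PosDef.fromBlocks₁₁ _ _ hM₂]
    simp only [sub_self]
    exact Matrix.PosSemidef.zero
  have h2 : ((1 - (l:ℂ)) • fromBlocks M₂ C₂ C₂ᴴ (C₂ᴴ * M₂⁻¹ * C₂)).PosSemidef := by
    rw [one_sub_coe]
    exact psd_smul hb₂ (by linarith)
  have hcombo := (psd_smul hb₁ hl0).add h2
  have hre : (l : ℂ) • fromBlocks M₁ C₁ C₁ᴴ (C₁ᴴ * M₁⁻¹ * C₁)
      + (1 - (l:ℂ)) • fromBlocks M₂ C₂ C₂ᴴ (C₂ᴴ * M₂⁻¹ * C₂)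
      = fromBlocks ((l : ℂ) • M₁ + (1 - (l : ℂ)) • M₂)
          ((l : ℂ) • C₁ + (1 - (l : ℂ)) • C₂)
          (((l : ℂ) • C₁ + (1 - (l : ℂ)) • C₂)ᴴ)
          ((l : ℂ) • (C₁ᴴ * M₁⁻¹ * C₁) + (1 - (l : ℂ)) • (C₂ᴴ * M₂⁻¹ * C₂)) := by
    rw [Matrix.fromBlocks_smul, Matrix.fromBlocks_smul, Matrix.fromBlocks_add]
    congr 1
    rw [conjTranspose_add, conjTranspose_smul, conjTranspose_smul, star_coe,
      star_sub, star_coe, star_one]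
  rw [hre] at hcombo
  exact (PosDef.fromBlocks₁₁ _ _ hMbar).mp hcombo
/-! ### the weighted geometric-type mean `W γ A B = √B (√B A⁻¹ √B)^{-γ} √B` -/

noncomputable def Wg (γ : ℝ) (A B : Matrix n n ℂ) : Matrix n n ℂ :=
  msqrt B * mrpow (msqrt B * A⁻¹ * msqrt B) (-γ) * msqrt B

lemma Zpd {A B : Matrix n n ℂ} (hA : A.PosDef) (hB : B.PosDef) :
    (msqrt B * A⁻¹ * msqrt B).PosDef := by
  have := posDef_conj hA.inv (msqrt_isUnit hB)
  rwa [(msqrt_isHermitian hB).eq] at this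

lemma cancel_left {P Q : Matrix n n ℂ} (h : P * Q = 1) (X : Matrix n n ℂ) :
    P * (Q * X) = X := by rw [← Matrix.mul_assoc, h, one_mul]

lemma Wg_posDef {A B : Matrix n n ℂ} (hA : A.PosDef) (hB : B.PosDef) (γ : ℝ) :
    (Wg γ A B).PosDef := by
  have := posDef_conj (mrpow_posDef (Zpd hA hB) (-γ)) (msqrt_isUnit hB)
  rwa [(msqrt_isHermitian hB).eq] at this

lemma Wg_isHermitian {A B : Matrix n n ℂ} (hA : A.PosDef) (hB : B.PosDef) (γ : ℝ) :
    (Wg γ A B).IsHermitian := (Wg_posDef hA hB γ).1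

lemma Wg_zero {A B : Matrix n n ℂ} (hA : A.PosDef) (hB : B.PosDef) : Wg 0 A B = B := by
  rw [Wg, neg_zero, mrpow_zero (Zpd hA hB).1, Matrix.mul_one, msqrt_mul_self hB.posSemidef]

lemma Wg_one {A B : Matrix n n ℂ} (hA : A.PosDef) (hB : B.PosDef) : Wg 1 A B = A := by
  have hz : mrpow (msqrt B * A⁻¹ * msqrt B) (-1) = (msqrt B)⁻¹ * A * (msqrt B)⁻¹ := by
    rw [mrpow_neg (Zpd hA hB), mrpow_one (Zpd hA hB).1, Matrix.mul_inv_rev, Matrix.mul_inv_rev,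
      Matrix.nonsing_inv_nonsing_inv _ ((isUnit_iff_isUnit_det _).mp hA.isUnit),
      ← Matrix.mul_assoc]
  rw [Wg, hz]
  exact sandwich (msqrt_mul_inv hB) (msqrt_inv_mul hB) A

lemma Wg_inv {A B : Matrix n n ℂ} (hA : A.PosDef) (hB : B.PosDef) (γ : ℝ) :
    (Wg γ A B)⁻¹ = (msqrt B)⁻¹ * mrpow (msqrt B * A⁻¹ * msqrt B) γ * (msqrt B)⁻¹ := by
  have hz : (mrpow (msqrt B * A⁻¹ * msqrt B) (-γ))⁻¹ = mrpow (msqrt B * A⁻¹ * msqrt B) γ := by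
    rw [mrpow_neg (Zpd hA hB),
      Matrix.nonsing_inv_nonsing_inv _ ((isUnit_iff_isUnit_det _).mp
        (mrpow_posDef (Zpd hA hB) γ).isUnit)]
  rw [Wg, Matrix.mul_inv_rev, Matrix.mul_inv_rev, hz, ← Matrix.mul_assoc]

lemma riccati_aux {S Z : Matrix n n ℂ} (h1 : S * S⁻¹ = 1) (h2 : S⁻¹ * S = 1) (hZ : Z.PosDef)
    {a b m : ℝ} (hb' : a + b = 2 * m) :
    S * mrpow Z (-m) * S * (S⁻¹ * mrpow Z a * S⁻¹) * (S * mrpow Z (-m) * S)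
      = S * mrpow Z (-b) * S := by
  have hb'' : -m + (a + -m) = -b := by linarith
  calc S * mrpow Z (-m) * S * (S⁻¹ * mrpow Z a * S⁻¹) * (S * mrpow Z (-m) * S)
      = S * (mrpow Z (-m) * (S * (S⁻¹ * (mrpow Z a * (S⁻¹
          * (S * (mrpow Z (-m) * S))))))) := by
        simp only [Matrix.mul_assoc]
    _ = S * (mrpow Z (-m) * (mrpow Z a * (mrpow Z (-m) * S))) := by
        rw [cancel_left h1, cancel_left h2]
    _ = S * mrpow Z (-b) * S := by
        rw [← Matrix.mul_assoc (mrpow Z a), mrpow_mul_mrpow hZ,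
          ← Matrix.mul_assoc (mrpow Z (-m)), mrpow_mul_mrpow hZ, hb'', Matrix.mul_assoc]

lemma Wg_riccati {A B : Matrix n n ℂ} (hA : A.PosDef) (hB : B.PosDef) {a b m : ℝ}
    (hm : a + b = 2 * m) :
    Wg m A B * (Wg a A B)⁻¹ * Wg m A B = Wg b A B := by
  rw [Wg_inv hA hB]
  unfold Wg
  exact riccati_aux (msqrt_mul_inv hB) (msqrt_inv_mul hB) (Zpd hA hB) hm

lemma Wg_block {A B : Matrix n n ℂ} (hA : A.PosDef) (hB : B.PosDef) {a b m : ℝ}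
    (hm : a + b = 2 * m) :
    (fromBlocks (Wg a A B) (Wg m A B) (Wg m A B) (Wg b A B)).PosSemidef := by
  have hZ := Zpd hA hB
  set Z := msqrt B * A⁻¹ * msqrt B with hZdef
  set X := mrpow Z (-a/2) with hXdef
  set Y := mrpow Z (-b/2) with hYdef
  have hXh : Xᴴ = X := (mrpow_isHermitian hZ.1 _).eq
  have hYh : Yᴴ = Y := (mrpow_isHermitian hZ.1 _).eq
  have ea : -a/2 + -a/2 = -a := by ring
  have eb : -b/2 + -b/2 = -b := by ring
  have em : -a/2 + -b/2 = -m := by linarith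
  have em' : -b/2 + -a/2 = -m := by linarith
  have hXX : X * X = mrpow Z (-a) := by rw [hXdef, mrpow_mul_mrpow hZ, ea]
  have hXY : X * Y = mrpow Z (-m) := by rw [hXdef, hYdef, mrpow_mul_mrpow hZ, em]
  have hYX : Y * X = mrpow Z (-m) := by rw [hYdef, hXdef, mrpow_mul_mrpow hZ, em']
  have hYY : Y * Y = mrpow Z (-b) := by rw [hYdef, mrpow_mul_mrpow hZ, eb]
  have hinner : (fromBlocks (mrpow Z (-a)) (mrpow Z (-m)) (mrpow Z (-m))
      (mrpow Z (-b))).PosSemidef := by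
    have hpsd := Matrix.posSemidef_conjTranspose_mul_self
      (fromBlocks X Y (0 : Matrix n n ℂ) (0 : Matrix n n ℂ))
    have he : (fromBlocks X Y (0 : Matrix n n ℂ) (0 : Matrix n n ℂ))ᴴ
        * fromBlocks X Y (0 : Matrix n n ℂ) (0 : Matrix n n ℂ)
        = fromBlocks (mrpow Z (-a)) (mrpow Z (-m)) (mrpow Z (-m)) (mrpow Z (-b)) := by
      rw [fromBlocks_conjTranspose, conjTranspose_zero, fromBlocks_multiply]
      simp only [hXh, hYh, Matrix.mul_zero, Matrix.zero_mul, add_zero, hXX, hXY, hYX, hYY]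
    rwa [he] at hpsd
  have hconj := hinner.conjTranspose_mul_mul_same (B := fromBlocks (msqrt B) 0 0 (msqrt B))
  have he2 : (fromBlocks (msqrt B) 0 0 (msqrt B))ᴴ
      * fromBlocks (mrpow Z (-a)) (mrpow Z (-m)) (mrpow Z (-m)) (mrpow Z (-b))
      * fromBlocks (msqrt B) 0 0 (msqrt B)
      = fromBlocks (Wg a A B) (Wg m A B) (Wg m A B) (Wg b A B) := by
    rw [fromBlocks_conjTranspose, conjTranspose_zero, (msqrt_isHermitian hB).eq,
      fromBlocks_multiply, fromBlocks_multiply]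
    simp only [Matrix.mul_zero, Matrix.zero_mul, add_zero, zero_add, Wg, hZdef]
  rwa [he2] at hconj

/-! ### concavity -/

def IsConc (n : Type*) [Fintype n] [DecidableEq n] (γ : ℝ) : Prop :=
  ∀ (A₁ A₂ B₁ B₂ : Matrix n n ℂ), A₁.PosDef → A₂.PosDef → B₁.PosDef → B₂.PosDef →
    ∀ l : ℝ, 0 ≤ l → l ≤ 1 →
    (Wg γ ((l:ℂ) • A₁ + (1 - (l:ℂ)) • A₂) ((l:ℂ) • B₁ + (1 - (l:ℂ)) • B₂)
      - ((l:ℂ) • Wg γ A₁ B₁ + (1 - (l:ℂ)) • Wg γ A₂ B₂)).PosSemidef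

lemma conc_zero : IsConc n 0 := by
  intro A₁ A₂ B₁ B₂ hA₁ hA₂ hB₁ hB₂ l hl0 hl1
  rw [Wg_zero (mix_posDef hA₁ hA₂ hl0 hl1) (mix_posDef hB₁ hB₂ hl0 hl1),
    Wg_zero hA₁ hB₁, Wg_zero hA₂ hB₂, sub_self]
  exact Matrix.PosSemidef.zero

lemma conc_one : IsConc n 1 := by
  intro A₁ A₂ B₁ B₂ hA₁ hA₂ hB₁ hB₂ l hl0 hl1
  rw [Wg_one (mix_posDef hA₁ hA₂ hl0 hl1) (mix_posDef hB₁ hB₂ hl0 hl1),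
    Wg_one hA₁ hB₁, Wg_one hA₂ hB₂, sub_self]
  exact Matrix.PosSemidef.zero

lemma conc_mid {a b : ℝ} (ha : IsConc n a) (hb : IsConc n b) : IsConc n ((a + b) / 2) := by
  intro A₁ A₂ B₁ B₂ hA₁ hA₂ hB₁ hB₂ l hl0 hl1
  set m : ℝ := (a + b) / 2 with hmdef
  have hm : a + b = 2 * m := by rw [hmdef]; ring
  set Ab := (l:ℂ) • A₁ + (1 - (l:ℂ)) • A₂ with hAbdef
  set Bb := (l:ℂ) • B₁ + (1 - (l:ℂ)) • B₂ with hBbdef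
  have hAb : Ab.PosDef := mix_posDef hA₁ hA₂ hl0 hl1
  have hBb : Bb.PosDef := mix_posDef hB₁ hB₂ hl0 hl1
  set R := (l:ℂ) • Wg m A₁ B₁ + (1 - (l:ℂ)) • Wg m A₂ B₂ with hRdef
  have hRh : Rᴴ = R := by
    rw [hRdef, conjTranspose_add, conjTranspose_smul, conjTranspose_smul, star_coe,
      star_sub, star_coe, star_one, (Wg_isHermitian hA₁ hB₁ m).eq, (Wg_isHermitian hA₂ hB₂ m).eq]
  have hblk₁ := Wg_block hA₁ hB₁ hm
  have hblk₂ := Wg_block hA₂ hB₂ hm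
  have h2 : ((1 - (l:ℂ)) • fromBlocks (Wg a A₂ B₂) (Wg m A₂ B₂) (Wg m A₂ B₂)
      (Wg b A₂ B₂)).PosSemidef := by
    rw [one_sub_coe]
    exact psd_smul hblk₂ (by linarith)
  have hcombo := (psd_smul hblk₁ hl0).add h2
  have hre : (l : ℂ) • fromBlocks (Wg a A₁ B₁) (Wg m A₁ B₁) (Wg m A₁ B₁) (Wg b A₁ B₁)
      + (1 - (l:ℂ)) • fromBlocks (Wg a A₂ B₂) (Wg m A₂ B₂) (Wg m A₂ B₂) (Wg b A₂ B₂)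
      = fromBlocks ((l:ℂ) • Wg a A₁ B₁ + (1 - (l:ℂ)) • Wg a A₂ B₂) R Rᴴ
          ((l:ℂ) • Wg b A₁ B₁ + (1 - (l:ℂ)) • Wg b A₂ B₂) := by
    rw [hRh, Matrix.fromBlocks_smul, Matrix.fromBlocks_smul, Matrix.fromBlocks_add]
  rw [hre] at hcombo
  have hblk := psd_sub_of_psd_add hcombo
    (ha A₁ A₂ B₁ B₂ hA₁ hA₂ hB₁ hB₂ l hl0 hl1)
    (hb A₁ A₂ B₁ B₂ hA₁ hA₂ hB₁ hB₂ l hl0 hl1)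
  exact ando_step (Wg_posDef hAb hBb a) (Wg_posDef hAb hBb m) hRh
    (Wg_riccati hAb hBb hm) hblk

lemma herm_smul {X : Matrix n n ℂ} (hX : X.IsHermitian) (l : ℝ) :
    ((l:ℂ) • X).IsHermitian := by
  unfold Matrix.IsHermitian
  rw [conjTranspose_smul, star_coe, hX.eq]

lemma herm_smul' {X : Matrix n n ℂ} (hX : X.IsHermitian) (l : ℝ) :
    ((1 - (l:ℂ)) • X).IsHermitian := by
  unfold Matrix.IsHermitian
  rw [conjTranspose_smul, star_sub, star_one, star_coe, hX.eq]

lemma conc_dyadic (m k : ℕ) (hk : k ≤ 2 ^ m) : IsConc n ((k : ℝ) / 2 ^ m) := by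
  induction m generalizing k with
  | zero =>
    interval_cases k
    · rw [show ((0:ℕ):ℝ) / 2 ^ (0:ℕ) = 0 by norm_num]
      exact conc_zero
    · rw [show ((1:ℕ):ℝ) / 2 ^ (0:ℕ) = 1 by norm_num]
      exact conc_one
  | succ m ih =>
    rcases Nat.even_or_odd k with ⟨j, hj⟩ | ⟨j, hj⟩
    · subst hj
      have hj2 : j ≤ 2 ^ m := by rw [pow_succ] at hk; omega
      have e : ((j + j : ℕ) : ℝ) / 2 ^ (m+1) = (j:ℝ) / 2 ^ m := by
        push_cast [pow_succ]
        have : (2:ℝ) ^ m ≠ 0 := by positivity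
        field_simp
        ring
      rw [e]
      exact ih j hj2
    · subst hj
      have hj1 : j + 1 ≤ 2 ^ m := by rw [pow_succ] at hk; omega
      have hj0 : j ≤ 2 ^ m := le_trans (Nat.le_succ j) hj1
      have hmid := conc_mid (ih j hj0) (ih (j+1) hj1)
      have e : (((j:ℕ):ℝ) / 2 ^ m + (((j+1:ℕ)):ℝ) / 2 ^ m) / 2 = ((2*j+1 : ℕ):ℝ) / 2 ^ (m+1) := by
        push_cast [pow_succ]
        have : (2:ℝ) ^ m ≠ 0 := by positivity
        field_simp
        ring
      rw [e] at hmid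
      exact hmid

lemma Wg_continuous {A B : Matrix n n ℂ} (hA : A.PosDef) (hB : B.PosDef) :
    Continuous (fun γ : ℝ => Wg γ A B) := by
  unfold Wg
  exact (continuous_const.matrix_mul
    ((mrpow_continuous (Zpd hA hB)).comp continuous_neg)).matrix_mul continuous_const

lemma conc_closed {γ : ℝ} (u : ℕ → ℝ) (hu : ∀ k, IsConc n (u k))
    (hlim : Filter.Tendsto u Filter.atTop (nhds γ)) : IsConc n γ := by
  intro A₁ A₂ B₁ B₂ hA₁ hA₂ hB₁ hB₂ l hl0 hl1
  have hAb : ((l:ℂ) • A₁ + (1 - (l:ℂ)) • A₂).PosDef := mix_posDef hA₁ hA₂ hl0 hl1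
  have hBb : ((l:ℂ) • B₁ + (1 - (l:ℂ)) • B₂).PosDef := mix_posDef hB₁ hB₂ hl0 hl1
  set G : ℝ → Matrix n n ℂ := fun c =>
    Wg c ((l:ℂ) • A₁ + (1 - (l:ℂ)) • A₂) ((l:ℂ) • B₁ + (1 - (l:ℂ)) • B₂)
      - ((l:ℂ) • Wg c A₁ B₁ + (1 - (l:ℂ)) • Wg c A₂ B₂) with hGdef
  have hGcont : Continuous G := by
    refine (Wg_continuous hAb hBb).sub (Continuous.add ?_ ?_)
    · exact (Wg_continuous hA₁ hB₁).const_smul (l:ℂ)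
    · exact (Wg_continuous hA₂ hB₂).const_smul (1 - (l:ℂ))
  have hGherm : (G γ).IsHermitian :=
    (Wg_isHermitian hAb hBb γ).sub
      ((herm_smul (Wg_isHermitian hA₁ hB₁ γ) l).add (herm_smul' (Wg_isHermitian hA₂ hB₂ γ) l))
  refine PosSemidef.of_dotProduct_mulVec_nonneg hGherm fun x => ?_
  have hF : Continuous (fun M : Matrix n n ℂ => star x ⬝ᵥ M *ᵥ x) :=
    continuous_const.dotProduct (continuous_id.matrix_mulVec continuous_const)
  have htend : Filter.Tendsto (fun k => star x ⬝ᵥ (G (u k)) *ᵥ x) Filter.atTop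
      (nhds (star x ⬝ᵥ (G γ) *ᵥ x)) :=
    ((hF.comp hGcont).tendsto γ).comp hlim
  refine ge_of_tendsto htend (Filter.Eventually.of_forall fun k => ?_)
  exact (hu k A₁ A₂ B₁ B₂ hA₁ hA₂ hB₁ hB₂ l hl0 hl1).dotProduct_mulVec_nonneg x

lemma conc_all {γ : ℝ} (h0 : 0 ≤ γ) (h1 : γ ≤ 1) : IsConc n γ := by
  set u : ℕ → ℝ := fun k => ((Nat.floor (γ * 2 ^ k) : ℕ) : ℝ) / 2 ^ k with hudef
  have hu : ∀ k, IsConc n (u k) := by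
    intro k
    refine conc_dyadic k _ ?_
    have h2k : (0:ℝ) < 2 ^ k := by positivity
    have : γ * 2 ^ k ≤ ((2 ^ k : ℕ) : ℝ) := by
      push_cast
      nlinarith
    calc Nat.floor (γ * 2 ^ k) ≤ Nat.floor (((2 ^ k : ℕ) : ℝ)) := Nat.floor_mono this
      _ = 2 ^ k := Nat.floor_natCast _
  have hlow : ∀ k, γ - (1/2) ^ k ≤ u k := by
    intro k
    have h2k : (0:ℝ) < 2 ^ k := by positivity
    have := Nat.lt_floor_add_one (γ * 2 ^ k)
    rw [hudef]
    simp only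
    rw [le_div_iff₀ h2k]
    have e : (1/2:ℝ)^k * 2^k = 1 := by
      rw [← mul_pow]
      norm_num
    nlinarith
  have hhigh : ∀ k, u k ≤ γ := by
    intro k
    have h2k : (0:ℝ) < 2 ^ k := by positivity
    rw [hudef]
    simp only
    rw [div_le_iff₀ h2k]
    exact Nat.floor_le (by positivity)
  have hlim : Filter.Tendsto u Filter.atTop (nhds γ) := by
    have hlo : Filter.Tendsto (fun k : ℕ => γ - (1/2:ℝ) ^ k) Filter.atTop (nhds γ) := by
      have := tendsto_pow_atTop_nhds_zero_of_lt_one (by norm_num : (0:ℝ) ≤ 1/2)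
        (by norm_num : (1/2:ℝ) < 1)
      have h2 := Filter.Tendsto.sub (tendsto_const_nhds (x := γ)) this
      simpa using h2
    exact tendsto_of_tendsto_of_tendsto_of_le_of_le hlo tendsto_const_nhds hlow hhigh
  exact conc_closed u hu hlim

end LiebAux

open LiebAux

/-- Joint convexity of `L(α; A,B,C) = C* B^{-1/2}(B^{1/2} A⁻¹ B^{1/2})^α B^{-1/2} C`. -/
theorem weighted_lieb_ruskai_convexity {n : Type*} [Fintype n] [DecidableEq n]
    (α : ℝ) (hα0 : 0 ≤ α) (hα1 : α ≤ 1)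
    (A₁ A₂ B₁ B₂ C₁ C₂ : Matrix n n ℂ)
    (hA₁ : A₁.PosDef) (hA₂ : A₂.PosDef) (hB₁ : B₁.PosDef) (hB₂ : B₂.PosDef)
    (l : ℝ) (hl0 : 0 ≤ l) (hl1 : l ≤ 1) :
    (((l : ℂ) • (C₁ᴴ * ((msqrt B₁)⁻¹ * mrpow (msqrt B₁ * A₁⁻¹ * msqrt B₁) α * (msqrt B₁)⁻¹) * C₁) +
        (1 - (l : ℂ)) •
          (C₂ᴴ * ((msqrt B₂)⁻¹ * mrpow (msqrt B₂ * A₂⁻¹ * msqrt B₂) α * (msqrt B₂)⁻¹) * C₂)) -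
      ((l : ℂ) • C₁ + (1 - (l : ℂ)) • C₂)ᴴ *
        ((msqrt ((l : ℂ) • B₁ + (1 - (l : ℂ)) • B₂))⁻¹ *
          mrpow (msqrt ((l : ℂ) • B₁ + (1 - (l : ℂ)) • B₂) *
              ((l : ℂ) • A₁ + (1 - (l : ℂ)) • A₂)⁻¹ *
              msqrt ((l : ℂ) • B₁ + (1 - (l : ℂ)) • B₂)) α *
          (msqrt ((l : ℂ) • B₁ + (1 - (l : ℂ)) • B₂))⁻¹) *
        ((l : ℂ) • C₁ + (1 - (l : ℂ)) • C₂)).PosSemidef := by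
  have hAbd : ((l:ℂ) • A₁ + (1 - (l:ℂ)) • A₂).PosDef := mix_posDef hA₁ hA₂ hl0 hl1
  have hBbd : ((l:ℂ) • B₁ + (1 - (l:ℂ)) • B₂).PosDef := mix_posDef hB₁ hB₂ hl0 hl1
  have hM₁ : (Wg α A₁ B₁).PosDef := Wg_posDef hA₁ hB₁ α
  have hM₂ : (Wg α A₂ B₂).PosDef := Wg_posDef hA₂ hB₂ α
  have hWb : (Wg α ((l:ℂ) • A₁ + (1 - (l:ℂ)) • A₂) ((l:ℂ) • B₁ + (1 - (l:ℂ)) • B₂)).PosDef :=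
    Wg_posDef hAbd hBbd α
  have hNd : ((l:ℂ) • Wg α A₁ B₁ + (1 - (l:ℂ)) • Wg α A₂ B₂).PosDef :=
    mix_posDef hM₁ hM₂ hl0 hl1
  have h1 := lr_convex (C₁ := C₁) (C₂ := C₂) hM₁ hM₂ hl0 hl1 hNd
  have hconc := conc_all hα0 hα1 A₁ A₂ B₁ B₂ hA₁ hA₂ hB₁ hB₂ l hl0 hl1
  have h2 := inv_antitone hWb hNd hconc
  have h3 := h2.conjTranspose_mul_mul_same (B := (l:ℂ) • C₁ + (1 - (l:ℂ)) • C₂)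
  rw [Matrix.mul_sub, Matrix.sub_mul] at h3
  have h4 := h1.add h3
  rw [sub_add_sub_cancel] at h4
  rw [← Wg_inv hA₁ hB₁ α, ← Wg_inv hA₂ hB₂ α, ← Wg_inv hAbd hBbd α]
  exact h4
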